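/- Let a finite group G act transitively on a finite set X, and let π₁, π₂ ∈ G have exactly k₁ and k₂ fixed points in X, respectively. If σ ∈ G is chosen uniformly at random, then the probability that π₁ and σ⁻¹π₂σ have a common fixed point in X is at most k₁k₂/|X|. -/
import Mathlib


/-- If a finite group `G` acts transitively on a finite set `X`, `π₁` has `k₁` fixed points and
`π₂` has `k₂` fixed points, then for uniformly random `σ ∈ G` the probability that `π₁` and
`σ⁻¹ π₂ σ` have a common fixed point is at most `k₁ k₂ / |X|`. -/
theorem prob_common_fixed_point_le (G X : Type*) [Group G] [Finite G] [Finite X]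
    [MulAction G X] [MulAction.IsPretransitive G X] (π₁ π₂ : G) (k₁ k₂ : ℕ)
    (h₁ : Nat.card (MulAction.fixedBy X π₁) = k₁)
    (h₂ : Nat.card (MulAction.fixedBy X π₂) = k₂) :
    (Nat.card {σ : G //
        (MulAction.fixedBy X π₁ ∩ MulAction.fixedBy X (σ⁻¹ * π₂ * σ)).Nonempty} : ℝ) /
      (Nat.card G : ℝ) ≤ (k₁ : ℝ) * (k₂ : ℝ) / (Nat.card X : ℝ) := by
  obtain hX | hX := isEmpty_or_nonempty X
  · have he : IsEmpty {σ : G //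
        (MulAction.fixedBy X π₁ ∩ MulAction.fixedBy X (σ⁻¹ * π₂ * σ)).Nonempty} := by
      constructor
      rintro ⟨σ, x, hx⟩
      exact hX.elim x
    rw [Nat.card_of_isEmpty]
    simp only [Nat.cast_zero, zero_div]
    positivity
  · classical
    let x₀ : X := Classical.arbitrary X
    let τ : X → G := fun x => (MulAction.exists_smul_eq G x₀ x).choose
    have hτ : ∀ x, τ x • x₀ = x := fun x => (MulAction.exists_smul_eq G x₀ x).choose_spec
    set S := {σ : G //
        (MulAction.fixedBy X π₁ ∩ MulAction.fixedBy X (σ⁻¹ * π₂ * σ)).Nonempty} with hS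
    -- injection into fix π₁ × fix π₂ × stabilizer x₀
    have key : ∀ σ : S, ∃ (x : MulAction.fixedBy X π₁) (y : MulAction.fixedBy X π₂)
        (s : MulAction.stabilizer G x₀), (σ : G) = τ (y : X) * (s : G) * (τ (x : X))⁻¹ := by
      rintro ⟨σ, hne⟩
      obtain ⟨x, hx₁, hx₂⟩ := hne
      have hy : π₂ • (σ • x) = σ • x := by
        have := hx₂
        rw [MulAction.mem_fixedBy, mul_smul, mul_smul] at this
        calc π₂ • (σ • x) = σ • σ⁻¹ • π₂ • σ • x := by rw [smul_inv_smul]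
        _ = σ • x := by rw [this]
      refine ⟨⟨x, hx₁⟩, ⟨σ • x, hy⟩, ⟨(τ (σ • x))⁻¹ * σ * τ x, ?_⟩, by group⟩
      show ((τ (σ • x))⁻¹ * σ * τ x) • x₀ = x₀
      rw [mul_smul, mul_smul, hτ, inv_smul_eq_iff, hτ]
    choose fx fy fs hf using key
    have hinj : Function.Injective (fun σ : S => (fx σ, fy σ, fs σ)) := by
      intro a b hab
      have h1 : fx a = fx b := congrArg Prod.fst hab
      have h2' : fy a = fy b := congrArg (fun p => p.2.1) hab
      have h3' : fs a = fs b := congrArg (fun p => p.2.2) hab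
      apply Subtype.ext
      rw [hf a, hf b, h1, h2', h3']
    have hcard : Nat.card S ≤ k₁ * k₂ * Nat.card (MulAction.stabilizer G x₀) := by
      calc Nat.card S ≤ Nat.card ((MulAction.fixedBy X π₁) ×
            (MulAction.fixedBy X π₂) × (MulAction.stabilizer G x₀)) :=
          Nat.card_le_card_of_injective _ hinj
        _ = k₁ * k₂ * Nat.card (MulAction.stabilizer G x₀) := by
          rw [Nat.card_prod, Nat.card_prod, h₁, h₂, mul_assoc]
    have hstab : Nat.card (MulAction.stabilizer G x₀) * Nat.card X = Nat.card G := by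
      rw [← MulAction.index_stabilizer_of_transitive G x₀]
      exact Subgroup.card_mul_index _
    have hXpos : 0 < (Nat.card X : ℝ) := by
      have := Nat.card_pos (α := X); positivity
    have hGpos : 0 < (Nat.card G : ℝ) := by
      have := Nat.card_pos (α := G); positivity
    rw [div_le_div_iff₀ hGpos hXpos]
    have : Nat.card S * Nat.card X ≤ k₁ * k₂ * Nat.card G := by
      calc Nat.card S * Nat.card X
          ≤ k₁ * k₂ * Nat.card (MulAction.stabilizer G x₀) * Nat.card X :=
            Nat.mul_le_mul_right _ hcard
        _ = k₁ * k₂ * Nat.card G := by rw [mul_assoc, hstab]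
    calc (Nat.card S : ℝ) * Nat.card X = ((Nat.card S * Nat.card X : ℕ) : ℝ) := by push_cast; ring
      _ ≤ ((k₁ * k₂ * Nat.card G : ℕ) : ℝ) := by exact_mod_cast this
      _ = (k₁ : ℝ) * k₂ * Nat.card G := by push_cast; ring
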